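/- For any small category C, the functor from C to the over category Cat/C sending an object x to the slice projection (Over x, Over.forget x : Over x ⥤ C) and a morphism f : x ⟶ y to Over.map f induces an equivalence of categories between C and the full subcategory of Cat/C spanned by the slice projections Over.forget x for x an object of C; that is, this functor exhibits C as a full subcategory of Cat/C. -/

import Mathlib

open CategoryTheory

universe u

def sliceOverFunctor (C : Type u) [SmallCategory C] : C ⥤ Over (Cat.of C) where
  obj x := Over.mk (Y := Cat.of (Over x)) ((Over.forget x).toCatHom : Cat.of (Over x) ⟶ Cat.of C)
  map {x y} f :=
    Over.homMk ((Over.map f).toCatHom : Cat.of (Over x) ⟶ Cat.of (Over y)) (congrArg Functor.toCatHom (Over.mapForget_eq f))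
  map_id x := by
    apply Over.OverMorphism.ext
    exact congrArg Functor.toCatHom (Over.mapId_eq x)
  map_comp f g := by
    apply Over.OverMorphism.ext
    exact congrArg Functor.toCatHom (Over.mapComp_eq f g)

section aux

variable {C : Type u} [SmallCategory C]

lemma over_obj_ext {X : C} {a b : Over X} (h : a.left = b.left)
    (hh : a.hom = eqToHom h ≫ b.hom) : a = b := by
  obtain ⟨al, ⟨⟨⟩⟩, ah⟩ := a
  obtain ⟨bl, ⟨⟨⟩⟩, bh⟩ := b
  change al = bl at h
  subst h
  simp only [eqToHom_refl, Category.id_comp] at hh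
  change ah = bh at hh
  subst hh
  rfl

lemma over_hom_congr {X : C} {a b : Over X} (h : a = b) :
    a.hom = eqToHom (congrArg Comma.left h) ≫ b.hom := by subst h; simp

lemma sliceOverFunctor_surj {x y : C}
    (η : (sliceOverFunctor C).obj x ⟶ (sliceOverFunctor C).obj y) :
    ∃ f : x ⟶ y, (sliceOverFunctor C).map f = η := by
  let G : Over x ⥤ Over y := η.left.toFunctor
  have hG : G ⋙ Over.forget y = Over.forget x := congrArg Cat.Hom.toFunctor (Over.w η)
  have hobj : ∀ a : Over x, (G.obj a).left = a.left := fun a => Functor.congr_obj hG a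
  let ix : Over x := Over.mk (𝟙 x)
  have hx : x = (G.obj ix).left := (hobj ix).symm
  refine ⟨eqToHom hx ≫ (G.obj ix).hom, ?_⟩
  apply Over.OverMorphism.ext
  apply congrArg Functor.toCatHom
  show Over.map _ = G
  have hhom : ∀ a : Over x,
      (G.obj a).hom = eqToHom (hobj a) ≫ a.hom ≫ eqToHom hx ≫ (G.obj ix).hom := by
    intro a
    let m : a ⟶ ix := Over.homMk a.hom
    have hw : (G.map m).left ≫ (G.obj ix).hom = (G.obj a).hom := Over.w (G.map m)
    have hm : (G.map m).left = eqToHom (hobj a) ≫ a.hom ≫ eqToHom hx := by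
      have := Functor.congr_hom hG m
      simpa [m] using this
    rw [← hw, hm]
    simp
  have hobj2 : ∀ a : Over x,
      G.obj a = (Over.map (eqToHom hx ≫ (G.obj ix).hom)).obj a := by
    intro a
    refine over_obj_ext (hobj a) ?_
    rw [hhom a]
    simp
  refine CategoryTheory.Functor.ext (fun a => (hobj2 a).symm) ?_
  intro a b m
  apply Over.OverMorphism.ext
  have : (G.map m).left = eqToHom (hobj a) ≫ m.left ≫ eqToHom (hobj b).symm := by
    have := Functor.congr_hom hG m
    simpa using this
  simp [this, Over.eqToHom_left]

end aux

/-- The functor `C ⥤ Cat/C` given by `x ↦ (Over x, Over.forget x)` and `f ↦ Over.map f`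
induces an equivalence between `C` and the full subcategory of `Cat/C` spanned by the slice
projections `Over.forget x`; that is, it exhibits `C` as a full subcategory of `Cat/C`. -/
theorem sliceOverFunctor_isEquivalence_onto_fullSubcategory (C : Type u) [SmallCategory C] :
    (ObjectProperty.lift
      (fun Z : Over (Cat.of C) =>
        ∃ x : C, Z = Over.mk (Y := Cat.of (Over x)) ((Over.forget x).toCatHom : Cat.of (Over x) ⟶ Cat.of C))
      (sliceOverFunctor C) (fun x => ⟨x, rfl⟩)).IsEquivalence := by
  have full : (sliceOverFunctor C).Full := by
    constructor
    intro x y η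
    obtain ⟨f, hf⟩ := sliceOverFunctor_surj η
    exact ⟨f, hf⟩
  have faithful : (sliceOverFunctor C).Faithful := by
    constructor
    intro x y f g h
    have h1 : (Over.map f : Over x ⥤ Over y) = Over.map g := congrArg (fun k => k.left.toFunctor) h
    have h2 := Functor.congr_obj h1 (Over.mk (𝟙 x))
    have h3 := over_hom_congr h2
    simpa using h3
  haveI := full
  haveI := faithful
  refine { essSurj := ?_ }
  constructor
  rintro ⟨Z, x, hZ⟩
  exact ⟨x, ⟨eqToIso (by subst hZ; rfl)⟩⟩
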